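/- arXiv:1307.5956 — 6 statements merged into one kernel-verified Lean document; each statement's English description precedes it below -/
import Mathlib

section
/- Let F : M → N be a C-module functor mapping a C-closed subcategory M to a C-closed subcategory N'. Then the canonical morphisms [F] : [M,N] → [F(M),F(N)], defined by ev_{F(M)} ∘ ([F] * id) = F(ev_M) ∘ (F²)^{-1}, assemble into a C-enriched functor: they satisfy [F] ∘ underline(id_M) = underline(id_{F(M)}) and [F] ∘ comp_N = comp_{F(N)} ∘ ([F] ⊗ [F]). In particular [F] : [M,M] → [F(M),F(M)] is a morphism of algebras in C. -/
open CategoryTheory MonoidalCategory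

universe v₁ v₂ v₃ u₁ u₂ u₃

/-- A left module category structure of a monoidal category `C` on a category `D`. -/
structure CModule (C : Type u₁) [Category.{v₁} C] [MonoidalCategory C]
    (D : Type u₂) [Category.{v₂} D] where
  act : C ⥤ D ⥤ D
  a : ∀ (X Y : C) (m : D), (act.obj X).obj ((act.obj Y).obj m) ≅ (act.obj (X ⊗ Y)).obj m
  a_nat_left : ∀ {X X' : C} (f : X ⟶ X') (Y : C) (m : D),
    (act.map f).app ((act.obj Y).obj m) ≫ (a X' Y m).hom
      = (a X Y m).hom ≫ (act.map (f ▷ Y)).app m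
  a_nat_mid : ∀ (X : C) {Y Y' : C} (g : Y ⟶ Y') (m : D),
    (act.obj X).map ((act.map g).app m) ≫ (a X Y' m).hom
      = (a X Y m).hom ≫ (act.map (X ◁ g)).app m
  a_nat_right : ∀ (X Y : C) {m m' : D} (h : m ⟶ m'),
    (act.obj X).map ((act.obj Y).map h) ≫ (a X Y m').hom
      = (a X Y m).hom ≫ (act.obj (X ⊗ Y)).map h
  u : ∀ m : D, (act.obj (𝟙_ C)).obj m ≅ m
  u_nat : ∀ {m m' : D} (h : m ⟶ m'),
    (act.obj (𝟙_ C)).map h ≫ (u m').hom = (u m).hom ≫ h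
  pentagon : ∀ (X Y Z : C) (m : D),
    (act.obj X).map (a Y Z m).hom ≫ (a X (Y ⊗ Z) m).hom ≫ (act.map (α_ X Y Z).inv).app m
      = (a X Y ((act.obj Z).obj m)).hom ≫ (a (X ⊗ Y) Z m).hom
  triangle : ∀ (X : C) (m : D),
    (act.obj X).map (u m).hom = (a X (𝟙_ C) m).hom ≫ (act.map (ρ_ X).hom).app m

namespace CModule

variable {C : Type u₁} [Category.{v₁} C] [MonoidalCategory C]
variable {D : Type u₂} [Category.{v₂} D] {E : Type u₃} [Category.{v₃} E]

/-- `(H, ev)` is an (action) internal hom `[m, n]` for the module category `P`. -/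
def IsInternalHom (P : CModule C D) (m n : D) (H : C)
    (ev : (P.act.obj H).obj m ⟶ n) : Prop :=
  ∀ (U : C) (f : (P.act.obj U).obj m ⟶ n),
    ∃! t : U ⟶ H, (P.act.map t).app m ≫ ev = f

end CModule

/-- A `C`-module functor between module categories. -/
structure CModuleFunctor {C : Type u₁} [Category.{v₁} C] [MonoidalCategory C]
    {D : Type u₂} [Category.{v₂} D] {E : Type u₃} [Category.{v₃} E]
    (P : CModule C D) (Q : CModule C E) where
  F : D ⥤ E
  e : ∀ (X : C) (m : D), F.obj ((P.act.obj X).obj m) ≅ (Q.act.obj X).obj (F.obj m)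
  e_nat_left : ∀ {X X' : C} (f : X ⟶ X') (m : D),
    F.map ((P.act.map f).app m) ≫ (e X' m).hom
      = (e X m).hom ≫ (Q.act.map f).app (F.obj m)
  e_nat_right : ∀ (X : C) {m m' : D} (h : m ⟶ m'),
    F.map ((P.act.obj X).map h) ≫ (e X m').hom
      = (e X m).hom ≫ (Q.act.obj X).map (F.map h)
  assoc' : ∀ (X Y : C) (m : D),
    F.map (P.a X Y m).hom ≫ (e (X ⊗ Y) m).hom
      = (e X ((P.act.obj Y).obj m)).hom ≫ (Q.act.obj X).map (e Y m).hom
          ≫ (Q.a X Y (F.obj m)).hom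
  unit' : ∀ m : D, F.map (P.u m).hom = (e (𝟙_ C) m).hom ≫ (Q.u (F.obj m)).hom

/-- The `C`-module condition on a natural transformation between `C`-module functors. -/
def IsModuleNatTrans {C : Type u₁} [Category.{v₁} C] [MonoidalCategory C]
    {D : Type u₂} [Category.{v₂} D] {E : Type u₃} [Category.{v₃} E]
    {P : CModule C D} {Q : CModule C E} (Φ Ψ : CModuleFunctor P Q)
    (φ : Φ.F ⟶ Ψ.F) : Prop :=
  ∀ (X : C) (m : D),
    (Φ.e X m).hom ≫ (Q.act.obj X).map (φ.app m)
      = φ.app ((P.act.obj X).obj m) ≫ (Ψ.e X m).hom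

/-- For a `C`-module functor `Φ : D → E`, the canonical morphisms
`[F] : [m,n] → [F(m),F(n)]` (defined via `ev ∘ ([F]*id) = F(ev) ∘ (F²)⁻¹`) assemble
into a `C`-enriched functor: they are compatible with the units and the internal
composition.  In particular `[F] : [m,m] → [F(m),F(m)]` is an algebra morphism. -/
theorem moduleFunctor_enriched_functor
    {C : Type u₁} [Category.{v₁} C] [MonoidalCategory C]
    {D : Type u₂} [Category.{v₂} D] {E : Type u₃} [Category.{v₃} E]
    (P : CModule C D) (Q : CModule C E)
    (Φ : CModuleFunctor P Q)
    (m n p : D)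
    -- internal homs in the source module category
    (Hmn : C) (evmn : (P.act.obj Hmn).obj m ⟶ n) (hmn : P.IsInternalHom m n Hmn evmn)
    (Hnp : C) (evnp : (P.act.obj Hnp).obj n ⟶ p) (hnp : P.IsInternalHom n p Hnp evnp)
    (Hmp : C) (evmp : (P.act.obj Hmp).obj m ⟶ p) (hmp : P.IsInternalHom m p Hmp evmp)
    (Hmm : C) (evmm : (P.act.obj Hmm).obj m ⟶ m) (hmm : P.IsInternalHom m m Hmm evmm)
    -- internal homs between the images in the target module category
    (Kmn : C) (evKmn : (Q.act.obj Kmn).obj (Φ.F.obj m) ⟶ Φ.F.obj n)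
    (hKmn : Q.IsInternalHom (Φ.F.obj m) (Φ.F.obj n) Kmn evKmn)
    (Knp : C) (evKnp : (Q.act.obj Knp).obj (Φ.F.obj n) ⟶ Φ.F.obj p)
    (hKnp : Q.IsInternalHom (Φ.F.obj n) (Φ.F.obj p) Knp evKnp)
    (Kmp : C) (evKmp : (Q.act.obj Kmp).obj (Φ.F.obj m) ⟶ Φ.F.obj p)
    (hKmp : Q.IsInternalHom (Φ.F.obj m) (Φ.F.obj p) Kmp evKmp)
    (Kmm : C) (evKmm : (Q.act.obj Kmm).obj (Φ.F.obj m) ⟶ Φ.F.obj m)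
    (hKmm : Q.IsInternalHom (Φ.F.obj m) (Φ.F.obj m) Kmm evKmm)
    -- the morphisms `[F]`
    (Fmn : Hmn ⟶ Kmn)
    (hFmn : (Q.act.map Fmn).app (Φ.F.obj m) ≫ evKmn = (Φ.e Hmn m).inv ≫ Φ.F.map evmn)
    (Fnp : Hnp ⟶ Knp)
    (hFnp : (Q.act.map Fnp).app (Φ.F.obj n) ≫ evKnp = (Φ.e Hnp n).inv ≫ Φ.F.map evnp)
    (Fmp : Hmp ⟶ Kmp)
    (hFmp : (Q.act.map Fmp).app (Φ.F.obj m) ≫ evKmp = (Φ.e Hmp m).inv ≫ Φ.F.map evmp)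
    (Fmm : Hmm ⟶ Kmm)
    (hFmm : (Q.act.map Fmm).app (Φ.F.obj m) ≫ evKmm = (Φ.e Hmm m).inv ≫ Φ.F.map evmm)
    -- units
    (um : 𝟙_ C ⟶ Hmm) (hum : (P.act.map um).app m ≫ evmm = (P.u m).hom)
    (uFm : 𝟙_ C ⟶ Kmm) (huFm : (Q.act.map uFm).app (Φ.F.obj m) ≫ evKmm = (Q.u (Φ.F.obj m)).hom)
    -- composition morphisms
    (c : Hnp ⊗ Hmn ⟶ Hmp)
    (hc : (P.act.map c).app m ≫ evmp
      = (P.a Hnp Hmn m).inv ≫ (P.act.obj Hnp).map evmn ≫ evnp)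
    (c' : Knp ⊗ Kmn ⟶ Kmp)
    (hc' : (Q.act.map c').app (Φ.F.obj m) ≫ evKmp
      = (Q.a Knp Kmn (Φ.F.obj m)).inv ≫ (Q.act.obj Knp).map evKmn ≫ evKnp) :
    um ≫ Fmm = uFm ∧ c ≫ Fmp = (Fnp ⊗ₘ Fmn) ≫ c' := by
    -- inverse form of `e_nat_left`
  have einvL : ∀ {X X' : C} (f : X ⟶ X') (mm : D),
      (Q.act.map f).app (Φ.F.obj mm) ≫ (Φ.e X' mm).inv
        = (Φ.e X mm).inv ≫ Φ.F.map ((P.act.map f).app mm) := by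
    intro X X' f mm
    rw [Iso.comp_inv_eq, Category.assoc, Φ.e_nat_left f mm, Iso.inv_hom_id_assoc]
  -- inverse form of `e_nat_right`
  have einvR : ∀ (X : C) {mm mm' : D} (h : mm ⟶ mm'),
      (Φ.e X mm).inv ≫ Φ.F.map ((P.act.obj X).map h)
        = (Q.act.obj X).map (Φ.F.map h) ≫ (Φ.e X mm').inv := by
    intro X mm mm' h
    rw [Iso.inv_comp_eq, ← Category.assoc, ← Φ.e_nat_right X h, Category.assoc,
      Iso.hom_inv_id, Category.comp_id]
  constructor
  · obtain ⟨t, -, ht⟩ := hKmm (𝟙_ C) (Q.u (Φ.F.obj m)).hom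
    have h1 : (Q.act.map (um ≫ Fmm)).app (Φ.F.obj m) ≫ evKmm = (Q.u (Φ.F.obj m)).hom := by
      calc (Q.act.map (um ≫ Fmm)).app (Φ.F.obj m) ≫ evKmm
          = (Q.act.map um).app (Φ.F.obj m) ≫ ((Q.act.map Fmm).app (Φ.F.obj m) ≫ evKmm) := by
            rw [Q.act.map_comp]; simp
        _ = ((Q.act.map um).app (Φ.F.obj m) ≫ (Φ.e Hmm m).inv) ≫ Φ.F.map evmm := by
            rw [hFmm, Category.assoc]
        _ = (Φ.e (𝟙_ C) m).inv ≫ Φ.F.map ((P.act.map um).app m ≫ evmm) := by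
            rw [einvL, Category.assoc, ← Φ.F.map_comp]
        _ = (Φ.e (𝟙_ C) m).inv ≫ Φ.F.map (P.u m).hom := by rw [hum]
        _ = (Q.u (Φ.F.obj m)).hom := by rw [Φ.unit', Iso.inv_hom_id_assoc]
    exact (ht _ h1).trans (ht _ huFm).symm
  · obtain ⟨t, -, ht⟩ := hKmp (Hnp ⊗ Hmn)
      ((Q.a Hnp Hmn (Φ.F.obj m)).inv
        ≫ (Q.act.obj Hnp).map ((Φ.e Hmn m).inv ≫ Φ.F.map evmn)
        ≫ (Φ.e Hnp n).inv ≫ Φ.F.map evnp)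
    have hA : (Q.act.map (c ≫ Fmp)).app (Φ.F.obj m) ≫ evKmp
        = (Q.a Hnp Hmn (Φ.F.obj m)).inv
            ≫ (Q.act.obj Hnp).map ((Φ.e Hmn m).inv ≫ Φ.F.map evmn)
            ≫ (Φ.e Hnp n).inv ≫ Φ.F.map evnp := by
      have hiso : (Φ.F.mapIso (P.a Hnp Hmn m) ≪≫ Φ.e (Hnp ⊗ Hmn) m)
          = (Φ.e Hnp ((P.act.obj Hmn).obj m)
              ≪≫ (Q.act.obj Hnp).mapIso (Φ.e Hmn m) ≪≫ Q.a Hnp Hmn (Φ.F.obj m)) :=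
        Iso.ext (by simpa using Φ.assoc' Hnp Hmn m)
      have hainv : (Φ.e (Hnp ⊗ Hmn) m).inv ≫ Φ.F.map (P.a Hnp Hmn m).inv
          = (Q.a Hnp Hmn (Φ.F.obj m)).inv
              ≫ (Q.act.obj Hnp).map (Φ.e Hmn m).inv
              ≫ (Φ.e Hnp ((P.act.obj Hmn).obj m)).inv := by
        simpa using congrArg Iso.inv hiso
      calc (Q.act.map (c ≫ Fmp)).app (Φ.F.obj m) ≫ evKmp
          = (Q.act.map c).app (Φ.F.obj m) ≫ ((Q.act.map Fmp).app (Φ.F.obj m) ≫ evKmp) := by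
            rw [Q.act.map_comp]; simp
        _ = ((Q.act.map c).app (Φ.F.obj m) ≫ (Φ.e Hmp m).inv) ≫ Φ.F.map evmp := by
            rw [hFmp, Category.assoc]
        _ = (Φ.e (Hnp ⊗ Hmn) m).inv ≫ Φ.F.map ((P.act.map c).app m ≫ evmp) := by
            rw [einvL, Category.assoc, ← Φ.F.map_comp]
        _ = (Φ.e (Hnp ⊗ Hmn) m).inv ≫ Φ.F.map (P.a Hnp Hmn m).inv
              ≫ Φ.F.map ((P.act.obj Hnp).map evmn) ≫ Φ.F.map evnp := by
            rw [hc]; simp [Φ.F.map_comp]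
        _ = (Q.a Hnp Hmn (Φ.F.obj m)).inv
              ≫ (Q.act.obj Hnp).map (Φ.e Hmn m).inv
              ≫ ((Φ.e Hnp ((P.act.obj Hmn).obj m)).inv
                ≫ Φ.F.map ((P.act.obj Hnp).map evmn)) ≫ Φ.F.map evnp := by
            rw [reassoc_of% hainv]; simp
        _ = (Q.a Hnp Hmn (Φ.F.obj m)).inv
              ≫ (Q.act.obj Hnp).map ((Φ.e Hmn m).inv ≫ Φ.F.map evmn)
              ≫ (Φ.e Hnp n).inv ≫ Φ.F.map evnp := by
            rw [einvR]; simp [Functor.map_comp]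
    have hB : (Q.act.map ((Fnp ⊗ₘ Fmn) ≫ c')).app (Φ.F.obj m) ≫ evKmp
        = (Q.a Hnp Hmn (Φ.F.obj m)).inv
            ≫ (Q.act.obj Hnp).map ((Φ.e Hmn m).inv ≫ Φ.F.map evmn)
            ≫ (Φ.e Hnp n).inv ≫ Φ.F.map evnp := by
      have hnatL : (Q.act.map (Fnp ▷ Hmn)).app (Φ.F.obj m) ≫ (Q.a Knp Hmn (Φ.F.obj m)).inv
          = (Q.a Hnp Hmn (Φ.F.obj m)).inv ≫ (Q.act.map Fnp).app ((Q.act.obj Hmn).obj (Φ.F.obj m)) := by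
        rw [Iso.comp_inv_eq, Category.assoc, Q.a_nat_left Fnp Hmn (Φ.F.obj m), Iso.inv_hom_id_assoc]
      have hnatM : (Q.act.map (Knp ◁ Fmn)).app (Φ.F.obj m) ≫ (Q.a Knp Kmn (Φ.F.obj m)).inv
          = (Q.a Knp Hmn (Φ.F.obj m)).inv ≫ (Q.act.obj Knp).map ((Q.act.map Fmn).app (Φ.F.obj m)) := by
        rw [Iso.comp_inv_eq, Category.assoc, Q.a_nat_mid Knp Fmn (Φ.F.obj m), Iso.inv_hom_id_assoc]
      calc (Q.act.map ((Fnp ⊗ₘ Fmn) ≫ c')).app (Φ.F.obj m) ≫ evKmp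
          = (Q.act.map (Fnp ▷ Hmn)).app (Φ.F.obj m)
              ≫ (Q.act.map (Knp ◁ Fmn)).app (Φ.F.obj m)
              ≫ ((Q.act.map c').app (Φ.F.obj m) ≫ evKmp) := by
            rw [MonoidalCategory.tensorHom_def, Q.act.map_comp, Q.act.map_comp]; simp
        _ = (Q.act.map (Fnp ▷ Hmn)).app (Φ.F.obj m)
              ≫ ((Q.act.map (Knp ◁ Fmn)).app (Φ.F.obj m)
                ≫ (Q.a Knp Kmn (Φ.F.obj m)).inv)
              ≫ (Q.act.obj Knp).map evKmn ≫ evKnp := by rw [hc']; simp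
        _ = ((Q.act.map (Fnp ▷ Hmn)).app (Φ.F.obj m)
              ≫ (Q.a Knp Hmn (Φ.F.obj m)).inv)
              ≫ (Q.act.obj Knp).map ((Q.act.map Fmn).app (Φ.F.obj m) ≫ evKmn) ≫ evKnp := by
            rw [hnatM]; simp [Functor.map_comp]
        _ = (Q.a Hnp Hmn (Φ.F.obj m)).inv
              ≫ ((Q.act.map Fnp).app ((Q.act.obj Hmn).obj (Φ.F.obj m))
                ≫ (Q.act.obj Knp).map ((Φ.e Hmn m).inv ≫ Φ.F.map evmn)) ≫ evKnp := by
            rw [hnatL, hFmn]; simp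
        _ = (Q.a Hnp Hmn (Φ.F.obj m)).inv
              ≫ (Q.act.obj Hnp).map ((Φ.e Hmn m).inv ≫ Φ.F.map evmn)
              ≫ ((Q.act.map Fnp).app (Φ.F.obj n) ≫ evKnp) := by
            rw [← (Q.act.map Fnp).naturality]; simp
        _ = (Q.a Hnp Hmn (Φ.F.obj m)).inv
              ≫ (Q.act.obj Hnp).map ((Φ.e Hmn m).inv ≫ Φ.F.map evmn)
              ≫ (Φ.e Hnp n).inv ≫ Φ.F.map evnp := by rw [hFnp]
    exact (ht _ hA).trans (ht _ hB).symm
end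

section
/- For C-module functors F, G : M → N between C-module categories, a C-module natural transformation φ : F → G, and objects M, N of M with all internal homs existing, the square [φ_M, G(N)] ∘ [G] = [F(M), φ_N] ∘ [F] commutes as morphisms [M,N] → [F(M), G(N)]. -/
open CategoryTheory MonoidalCategory

universe v₁ v₂ v₃ u₁ u₂ u₃

/-- For `C`-module functors `F, G : D → E`, a `C`-module natural
transformation `φ : F → G`, and objects `m, n` with all internal homs existing, the square
`[φ_m, G(n)] ∘ [G] = [F(m), φ_n] ∘ [F]` commutes as morphisms `[m,n] → [F(m), G(n)]`. -/
theorem moduleNatTrans_internalHom_square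
    {C : Type u₁} [Category.{v₁} C] [MonoidalCategory C]
    {D : Type u₂} [Category.{v₂} D] {E : Type u₃} [Category.{v₃} E]
    (P : CModule C D) (Q : CModule C E)
    (Φ Ψ : CModuleFunctor P Q)
    (φ : Φ.F ⟶ Ψ.F) (hφ : IsModuleNatTrans Φ Ψ φ)
    (m n : D)
    (Hmn : C) (evmn : (P.act.obj Hmn).obj m ⟶ n) (hmn : P.IsInternalHom m n Hmn evmn)
    (KF : C) (evF : (Q.act.obj KF).obj (Φ.F.obj m) ⟶ Φ.F.obj n)
    (hKF : Q.IsInternalHom (Φ.F.obj m) (Φ.F.obj n) KF evF)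
    (KG : C) (evG : (Q.act.obj KG).obj (Ψ.F.obj m) ⟶ Ψ.F.obj n)
    (hKG : Q.IsInternalHom (Ψ.F.obj m) (Ψ.F.obj n) KG evG)
    (KFG : C) (evFG : (Q.act.obj KFG).obj (Φ.F.obj m) ⟶ Ψ.F.obj n)
    (hKFG : Q.IsInternalHom (Φ.F.obj m) (Ψ.F.obj n) KFG evFG)
    -- `[F] : [m,n] → [F(m),F(n)]`
    (brF : Hmn ⟶ KF)
    (hbrF : (Q.act.map brF).app (Φ.F.obj m) ≫ evF = (Φ.e Hmn m).inv ≫ Φ.F.map evmn)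
    -- `[G] : [m,n] → [G(m),G(n)]`
    (brG : Hmn ⟶ KG)
    (hbrG : (Q.act.map brG).app (Ψ.F.obj m) ≫ evG = (Ψ.e Hmn m).inv ≫ Ψ.F.map evmn)
    -- `[F(m), φ_n] : [F(m),F(n)] → [F(m),G(n)]`
    (postφ : KF ⟶ KFG)
    (hpostφ : (Q.act.map postφ).app (Φ.F.obj m) ≫ evFG = evF ≫ φ.app n)
    -- `[φ_m, G(n)] : [G(m),G(n)] → [F(m),G(n)]`
    (preφ : KG ⟶ KFG)
    (hpreφ : (Q.act.map preφ).app (Φ.F.obj m) ≫ evFG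
      = (Q.act.obj KG).map (φ.app m) ≫ evG) :
    brG ≫ preφ = brF ≫ postφ := by
  obtain ⟨t, -, ht⟩ := hKFG Hmn ((Φ.e Hmn m).inv ≫ φ.app ((P.act.obj Hmn).obj m) ≫ Ψ.F.map evmn)
  have h1 : (Q.act.map (brG ≫ preφ)).app (Φ.F.obj m) ≫ evFG
      = (Φ.e Hmn m).inv ≫ φ.app ((P.act.obj Hmn).obj m) ≫ Ψ.F.map evmn := by
    have hnat : (Q.act.obj Hmn).map (φ.app m) ≫ (Q.act.map brG).app (Ψ.F.obj m)
        = (Q.act.map brG).app (Φ.F.obj m) ≫ (Q.act.obj KG).map (φ.app m) :=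
      (Q.act.map brG).naturality (φ.app m)
    have hmod : (Q.act.obj Hmn).map (φ.app m) ≫ (Ψ.e Hmn m).inv
        = (Φ.e Hmn m).inv ≫ φ.app ((P.act.obj Hmn).obj m) := by
      rw [Iso.comp_inv_eq, Category.assoc, ← hφ Hmn m, Iso.inv_hom_id_assoc]
    calc (Q.act.map (brG ≫ preφ)).app (Φ.F.obj m) ≫ evFG
        = (Q.act.map brG).app (Φ.F.obj m) ≫ ((Q.act.map preφ).app (Φ.F.obj m) ≫ evFG) := by
          simp [Q.act.map_comp]
      _ = (Q.act.map brG).app (Φ.F.obj m) ≫ (Q.act.obj KG).map (φ.app m) ≫ evG := by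
          rw [hpreφ]
      _ = (Q.act.obj Hmn).map (φ.app m) ≫ (Q.act.map brG).app (Ψ.F.obj m) ≫ evG := by
          rw [← Category.assoc, ← hnat, Category.assoc]
      _ = (Q.act.obj Hmn).map (φ.app m) ≫ (Ψ.e Hmn m).inv ≫ Ψ.F.map evmn := by rw [hbrG]
      _ = (Φ.e Hmn m).inv ≫ φ.app ((P.act.obj Hmn).obj m) ≫ Ψ.F.map evmn := by
          rw [← Category.assoc, hmod, Category.assoc]
  have h2 : (Q.act.map (brF ≫ postφ)).app (Φ.F.obj m) ≫ evFG
      = (Φ.e Hmn m).inv ≫ φ.app ((P.act.obj Hmn).obj m) ≫ Ψ.F.map evmn := by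
    calc (Q.act.map (brF ≫ postφ)).app (Φ.F.obj m) ≫ evFG
        = (Q.act.map brF).app (Φ.F.obj m) ≫ ((Q.act.map postφ).app (Φ.F.obj m) ≫ evFG) := by
          simp [Q.act.map_comp]
      _ = (Q.act.map brF).app (Φ.F.obj m) ≫ evF ≫ φ.app n := by rw [hpostφ]
      _ = (Φ.e Hmn m).inv ≫ Φ.F.map evmn ≫ φ.app n := by
          rw [← Category.assoc, hbrF, Category.assoc]
      _ = (Φ.e Hmn m).inv ≫ φ.app ((P.act.obj Hmn).obj m) ≫ Ψ.F.map evmn := by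
          rw [φ.naturality]
  rw [ht _ h1, ht _ h2]
end

section
/- Let C be a monoidal category, M a left C-module, and Z(C) the monoidal (Drinfeld) center of C. The alpha-induction functor α : Z(C) → End_C(M), sending (Z,z) to the C-module endofunctor Z * (−) with module structure given by the half-braiding z, lifts through the forgetful functor Z(End_C(M)) → End_C(M) to a monoidal functor Z(C) → Z(End_C(M)), with half-braiding δ_{Z,F} : α(Z)∘F → F∘α(Z) given componentwise by (F²_{Z,M})^{-1} : Z*F(M) → F(Z*M). -/
open CategoryTheory MonoidalCategory

universe v₁ v₂ v₃ u₁ u₂ u₃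

/-- Inverse form of the associativity constraint of a module functor. -/
theorem CModuleFunctor.inv_assoc {C : Type u₁} [Category.{v₁} C] [MonoidalCategory C]
    {D : Type u₂} [Category.{v₂} D] {P : CModule C D} (Φ : CModuleFunctor P P)
    (X Y : C) (m : D) :
    (Φ.e (X ⊗ Y) m).inv ≫ Φ.F.map (P.a X Y m).inv
      = (P.a X Y (Φ.F.obj m)).inv ≫ (P.act.obj X).map (Φ.e Y m).inv
          ≫ (Φ.e X ((P.act.obj Y).obj m)).inv := by
  rw [← cancel_epi (Φ.F.map (P.a X Y m).hom ≫ (Φ.e (X ⊗ Y) m).hom)]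
  simp only [Category.assoc, Iso.hom_inv_id_assoc]
  rw [reassoc_of% (Φ.assoc' X Y m)]
  simp [← Functor.map_comp]

/-- Inverse form of left naturality of the module structure of a module functor. -/
theorem CModuleFunctor.inv_nat_left {C : Type u₁} [Category.{v₁} C] [MonoidalCategory C]
    {D : Type u₂} [Category.{v₂} D] {P : CModule C D} (Φ : CModuleFunctor P P)
    {X X' : C} (f : X ⟶ X') (m : D) :
    (Φ.e X m).inv ≫ Φ.F.map ((P.act.map f).app m)
      = (P.act.map f).app (Φ.F.obj m) ≫ (Φ.e X' m).inv := by
  rw [← cancel_epi (Φ.e X m).hom, ← cancel_mono (Φ.e X' m).hom]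
  simp [Φ.e_nat_left f m]

/-- For a left `C`-module `D`, alpha-induction factors through the
Drinfeld center of the category of `C`-module endofunctors of `D`: for every object
`Z` of the Drinfeld center `Center C`, the family
`δ_{Z,F} := (F²_{Z,-})⁻¹ : α(Z) ∘ F → F ∘ α(Z)` is a half-braiding against `C`-module
endofunctors, i.e. each `δ_{Z,F}` is a `C`-module natural transformation, `δ` is natural
with respect to `C`-module natural transformations, it is compatible with the monoidal
structure `α(Z ⊗ W) ≅ α(Z) ∘ α(W)` of alpha-induction, and it is natural in `Z` with
respect to morphisms of the Drinfeld center. -/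
theorem alphaInduction_factors_through_center
    {C : Type u₁} [Category.{v₁} C] [MonoidalCategory C]
    {D : Type u₂} [Category.{v₂} D]
    (P : CModule C D) (Z : CategoryTheory.Center C) :
    -- (i) each `δ_{Z,F}` is a `C`-module natural transformation `α(Z)∘F → F∘α(Z)`
    (∀ (Φ : CModuleFunctor P P) (X : C) (m : D),
      (P.act.obj Z.1).map (Φ.e X m).hom
        ≫ (P.a Z.1 X (Φ.F.obj m)).hom
        ≫ (P.act.map (Z.2.β X).hom).app (Φ.F.obj m)
        ≫ (P.a X Z.1 (Φ.F.obj m)).inv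
        ≫ (P.act.obj X).map (Φ.e Z.1 m).inv
      = (Φ.e Z.1 ((P.act.obj X).obj m)).inv
        ≫ Φ.F.map ((P.a Z.1 X m).hom
            ≫ (P.act.map (Z.2.β X).hom).app m
            ≫ (P.a X Z.1 m).inv)
        ≫ (Φ.e X ((P.act.obj Z.1).obj m)).hom)
    -- (ii) naturality of `δ_{Z,-}` with respect to `C`-module natural transformations
    ∧ (∀ (Φ Φ' : CModuleFunctor P P) (ψ : Φ.F ⟶ Φ'.F),
        IsModuleNatTrans Φ Φ' ψ → ∀ m : D,
        (P.act.obj Z.1).map (ψ.app m) ≫ (Φ'.e Z.1 m).inv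
          = (Φ.e Z.1 m).inv ≫ ψ.app ((P.act.obj Z.1).obj m))
    -- (iii) compatibility with the monoidal structure of alpha-induction
    ∧ (∀ (Φ : CModuleFunctor P P) (W : CategoryTheory.Center C) (m : D),
        (P.a Z.1 W.1 (Φ.F.obj m)).hom
          ≫ (Φ.e (Z.1 ⊗ W.1) m).inv
          ≫ Φ.F.map (P.a Z.1 W.1 m).inv
        = (P.act.obj Z.1).map (Φ.e W.1 m).inv
          ≫ (Φ.e Z.1 ((P.act.obj W.1).obj m)).inv)
    -- (iv) naturality in the center variable
    ∧ (∀ (Φ : CModuleFunctor P P) (Z' : CategoryTheory.Center C) (f : Z ⟶ Z') (m : D),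
        (P.act.map f.f).app (Φ.F.obj m) ≫ (Φ.e Z'.1 m).inv
          = (Φ.e Z.1 m).inv ≫ Φ.F.map ((P.act.map f.f).app m)) := by
  refine ⟨?_, ?_, ?_, ?_⟩
  · intro Φ X m
    have h1 : (Φ.e Z.1 ((P.act.obj X).obj m)).inv ≫ Φ.F.map (P.a Z.1 X m).hom
        = (P.act.obj Z.1).map (Φ.e X m).hom ≫ (P.a Z.1 X (Φ.F.obj m)).hom
            ≫ (Φ.e (Z.1 ⊗ X) m).inv := by
      rw [← cancel_epi (Φ.e Z.1 ((P.act.obj X).obj m)).hom,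
        ← cancel_mono (Φ.e (Z.1 ⊗ X) m).hom]
      simp [Φ.assoc' Z.1 X m]
    have h3 : (Φ.e (X ⊗ Z.1) m).inv ≫ Φ.F.map (P.a X Z.1 m).inv
          ≫ (Φ.e X ((P.act.obj Z.1).obj m)).hom
        = (P.a X Z.1 (Φ.F.obj m)).inv ≫ (P.act.obj X).map (Φ.e Z.1 m).inv := by
      rw [reassoc_of% (Φ.inv_assoc X Z.1 m)]
      simp
    simp only [Functor.map_comp, Category.assoc]
    rw [reassoc_of% h1, reassoc_of% (Φ.inv_nat_left (Z.2.β X).hom m), h3]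
  · intro Φ Φ' ψ hψ m
    rw [← cancel_epi (Φ.e Z.1 m).hom, ← cancel_mono (Φ'.e Z.1 m).hom]
    simpa using hψ Z.1 m
  · intro Φ W m
    rw [Φ.inv_assoc Z.1 W.1 m]
    simp
  · intro Φ Z' f m
    exact (Φ.inv_nat_left f.f m).symm
end

section
/- Let F : M → N be a C-module functor. Then for each Z in the Drinfeld center Z(C), the family (ζ(F)_Z)_M := F²_{Z,M} : F(Z*M) → Z*F(M) defines a C-module natural isomorphism F ∘ α_M(Z) → α_N(Z) ∘ F, natural in Z; hence the left and right Z(C)-actions on the category of C-module functors from M to N are naturally isomorphic. -/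
open CategoryTheory MonoidalCategory

universe v₁ v₂ v₃ u₁ u₂ u₃

/-- For a `C`-module functor `F : D → E` and each object `Z` of the
Drinfeld center, the family `(ζ(F)_Z)_m := F²_{Z,m} : F(Z*m) → Z*F(m)` is a `C`-module
natural isomorphism `F ∘ α_D(Z) → α_E(Z) ∘ F`, natural in `Z`; hence the left and right
`Z(C)`-actions on the category of `C`-module functors `D → E` are naturally isomorphic. -/
theorem zeta_moduleNatIso
    {C : Type u₁} [Category.{v₁} C] [MonoidalCategory C]
    {D : Type u₂} [Category.{v₂} D] {E : Type u₃} [Category.{v₃} E]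
    (P : CModule C D) (Q : CModule C E)
    (Φ : CModuleFunctor P Q) :
    -- `ζ(F)_Z` is a `C`-module natural transformation `F ∘ α_D(Z) → α_E(Z) ∘ F`
    (∀ (Z : CategoryTheory.Center C) (X : C) (m : D),
      Φ.F.map ((P.a Z.1 X m).hom
          ≫ (P.act.map (Z.2.β X).hom).app m
          ≫ (P.a X Z.1 m).inv)
        ≫ (Φ.e X ((P.act.obj Z.1).obj m)).hom
        ≫ (Q.act.obj X).map (Φ.e Z.1 m).hom
      = (Φ.e Z.1 ((P.act.obj X).obj m)).hom
        ≫ (Q.act.obj Z.1).map (Φ.e X m).hom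
        ≫ (Q.a Z.1 X (Φ.F.obj m)).hom
        ≫ (Q.act.map (Z.2.β X).hom).app (Φ.F.obj m)
        ≫ (Q.a X Z.1 (Φ.F.obj m)).inv)
    -- each component is an isomorphism
    ∧ (∀ (Z : CategoryTheory.Center C) (m : D), IsIso (Φ.e Z.1 m).hom)
    -- `ζ(F)` is natural in the center variable
    ∧ (∀ (Z Z' : CategoryTheory.Center C) (f : Z ⟶ Z') (m : D),
        Φ.F.map ((P.act.map f.f).app m) ≫ (Φ.e Z'.1 m).hom
          = (Φ.e Z.1 m).hom ≫ (Q.act.map f.f).app (Φ.F.obj m)) := by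
  refine ⟨fun Z X m => ?_, fun Z m => inferInstance, fun Z Z' f m => Φ.e_nat_left f.f m⟩
  have h1 := Φ.assoc' Z.1 X m
  have h2 := Φ.e_nat_left (Z.2.β X).hom m
  have h3 := Φ.assoc' X Z.1 m
  have h3' : Φ.F.map (P.a X Z.1 m).inv ≫ (Φ.e X ((P.act.obj Z.1).obj m)).hom
      ≫ (Q.act.obj X).map (Φ.e Z.1 m).hom
      = (Φ.e (X ⊗ Z.1) m).hom ≫ (Q.a X Z.1 (Φ.F.obj m)).inv := by
    rw [show Φ.F.map (P.a X Z.1 m).inv = (Φ.F.mapIso (P.a X Z.1 m)).inv from rfl,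
      Iso.inv_comp_eq, Functor.mapIso_hom, ← Category.assoc, h3]
    simp
  simp only [Functor.map_comp, Category.assoc, h3']
  rw [reassoc_of% h2, reassoc_of% h1]
end

section
/- Given cospans of commutative algebras A → T ← B and B → S ← C in a braided monoidal category Z (with the algebra maps into T and S landing centrally in the sense that a : A → T satisfies μ∘(id_T⊗a) = μ∘(a⊗id_T)∘c_{T,A} and dually for the maps from B and C), the fibered tensor product T⊗_B S (coequalizer of the two B-actions) carries a unique algebra structure making the coequalizer map ρ : T⊗S → T⊗_B S an algebra homomorphism, where T⊗S has the braided tensor-product algebra structure μ_{TS} = (μ_T⊗μ_S)∘(id⊗c_{S,T}⊗id). -/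
open CategoryTheory MonoidalCategory

universe v u

/-- `ρ : V ⟶ Q` is a coequalizer of the parallel pair `L, R : U ⟶ V`
(elementary formulation of the universal property). -/
def IsCoeq {Z : Type u} [Category.{v} Z] {U V Q : Z}
    (L R : U ⟶ V) (ρ : V ⟶ Q) : Prop :=
  L ≫ ρ = R ≫ ρ ∧ ∀ ⦃W : Z⦄ (h : V ⟶ W), L ≫ h = R ≫ h → ∃! k : Q ⟶ W, ρ ≫ k = h

set_option maxHeartbeats 1600000 in
/-- Given cospans of commutative algebras `A → T ← B` and `B → S ← C`
(with centrally-landing legs), the fibered tensor product `T ⊗_B S` (the coequalizer of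
the two `B`-actions) carries a unique algebra structure making the coequalizer map
`ρ : T ⊗ S → T ⊗_B S` an algebra homomorphism, where `T ⊗ S` carries the braided
tensor-product algebra structure. -/
theorem fiberedTensorProduct_algebra
    {Z : Type u} [Category.{v} Z] [MonoidalCategory Z] [BraidedCategory Z]
    (hexist : ∀ {U V : Z} (L R : U ⟶ V) (τ : V ⟶ U),
      τ ≫ L = 𝟙 V → τ ≫ R = 𝟙 V → ∃ (Q : Z) (ρ : V ⟶ Q), IsCoeq L R ρ)
    (hpres : ∀ {U V Q : Z} (L R : U ⟶ V) (ρ : V ⟶ Q) (τ : V ⟶ U),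
      τ ≫ L = 𝟙 V → τ ≫ R = 𝟙 V → IsCoeq L R ρ →
      ∀ X : Z, IsCoeq (X ◁ L) (X ◁ R) (X ◁ ρ) ∧ IsCoeq (L ▷ X) (R ▷ X) (ρ ▷ X))
    (T S B : Mon Z)
    (hB : (β_ B.X B.X).hom ≫ B.mon.mul = B.mon.mul)  -- B is commutative
    (b : B ⟶ T) (b' : B ⟶ S)
    -- the leg `b : B → T` lands centrally (left-center condition)
    (hbc : (b.hom ▷ T.X) ≫ T.mon.mul = (β_ B.X T.X).hom ≫ (T.X ◁ b.hom) ≫ T.mon.mul)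
    -- the leg `b' : B → S` lands centrally (right-center condition)
    (hb'c : (S.X ◁ b'.hom) ≫ S.mon.mul = (β_ S.X B.X).hom ≫ (b'.hom ▷ S.X) ≫ S.mon.mul)
    -- the fibered tensor product as a coequalizer
    (Q : Z) (ρ : T.X ⊗ S.X ⟶ Q)
    (hρ : IsCoeq
      (((T.X ◁ b.hom) ≫ T.mon.mul) ▷ S.X)
      ((α_ T.X B.X S.X).hom ≫ (T.X ◁ ((b'.hom ▷ S.X) ≫ S.mon.mul)))
      ρ) :
    ∃ (mulQ : Q ⊗ Q ⟶ Q) (oneQ : 𝟙_ Z ⟶ Q),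
      -- algebra axioms
      ((mulQ ▷ Q) ≫ mulQ = (α_ Q Q Q).hom ≫ (Q ◁ mulQ) ≫ mulQ)
      ∧ ((oneQ ▷ Q) ≫ mulQ = (λ_ Q).hom)
      ∧ ((Q ◁ oneQ) ≫ mulQ = (ρ_ Q).hom)
      -- `ρ` is an algebra homomorphism
      ∧ ((ρ ⊗ₘ ρ) ≫ mulQ = (T ⊗ S : Mon Z).mon.mul ≫ ρ)
      ∧ ((T ⊗ S : Mon Z).mon.one ≫ ρ = oneQ)
      -- uniqueness of the algebra structure with this property
      ∧ (∀ (mul' : Q ⊗ Q ⟶ Q) (one' : 𝟙_ Z ⟶ Q),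
          ((mul' ▷ Q) ≫ mul' = (α_ Q Q Q).hom ≫ (Q ◁ mul') ≫ mul') →
          ((one' ▷ Q) ≫ mul' = (λ_ Q).hom) →
          ((Q ◁ one') ≫ mul' = (ρ_ Q).hom) →
          ((ρ ⊗ₘ ρ) ≫ mul' = (T ⊗ S : Mon Z).mon.mul ≫ ρ) →
          ((T ⊗ S : Mon Z).mon.one ≫ ρ = one') →
          mul' = mulQ ∧ one' = oneQ) := by
  clear hexist hB
  -- names
  set L : (T.X ⊗ B.X) ⊗ S.X ⟶ T.X ⊗ S.X := ((T.X ◁ b.hom) ≫ T.mon.mul) ▷ S.X with hLdef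
  set R : (T.X ⊗ B.X) ⊗ S.X ⟶ T.X ⊗ S.X :=
    (α_ T.X B.X S.X).hom ≫ (T.X ◁ ((b'.hom ▷ S.X) ≫ S.mon.mul)) with hRdef
  -- cancellation property of coequalizers
  have cancel : ∀ {U V Q' : Z} {L' R' : U ⟶ V} {ρ' : V ⟶ Q'}, IsCoeq L' R' ρ' →
      ∀ {W : Z} (g h : Q' ⟶ W), ρ' ≫ g = ρ' ≫ h → g = h := by
    intro U V Q' L' R' ρ' hc W g h hgh
    obtain ⟨k, -, hk⟩ := hc.2 (ρ' ≫ g) (by rw [← Category.assoc, hc.1, Category.assoc])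
    rw [hk g rfl, hk h hgh.symm]
  -- the common section of L and R
  set τ : T.X ⊗ S.X ⟶ (T.X ⊗ B.X) ⊗ S.X := ((ρ_ T.X).inv ≫ (T.X ◁ B.mon.one)) ▷ S.X with hτdef
  have hτL : τ ≫ L = 𝟙 _ := by
    rw [hτdef, hLdef]
    simp only [← comp_whiskerRight, Category.assoc, ← MonoidalCategory.whiskerLeft_comp_assoc]
    rw [IsMonHom.one_hom b.hom]
    simp
  have hτR : τ ≫ R = 𝟙 _ := by
    rw [hτdef, hRdef]
    simp only [comp_whiskerRight, Category.assoc]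
    rw [associator_naturality_middle_assoc]
    simp only [← MonoidalCategory.whiskerLeft_comp, ← comp_whiskerRight_assoc]
    rw [IsMonHom.one_hom b'.hom]
    simp
  -- whiskered coequalizers
  have hc1 := (hpres L R ρ τ hτL hτR hρ (T.X ⊗ S.X)).2
  have hc2 := (hpres L R ρ τ hτL hτR hρ Q).1
  have hc3 := (hpres L R ρ τ hτL hτR hρ ((T.X ⊗ B.X) ⊗ S.X)).2
  have hc4 := (hpres (L ▷ (T.X ⊗ S.X)) (R ▷ (T.X ⊗ S.X)) (ρ ▷ (T.X ⊗ S.X)) (τ ▷ (T.X ⊗ S.X))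
    (by rw [← comp_whiskerRight, hτL, id_whiskerRight])
    (by rw [← comp_whiskerRight, hτR, id_whiskerRight]) hc1 (T.X ⊗ S.X)).2
  have hc5 := (hpres (Q ◁ L) (Q ◁ R) (Q ◁ ρ) (Q ◁ τ)
    (by rw [← MonoidalCategory.whiskerLeft_comp, hτL, MonoidalCategory.whiskerLeft_id])
    (by rw [← MonoidalCategory.whiskerLeft_comp, hτR, MonoidalCategory.whiskerLeft_id])
    hc2 (T.X ⊗ S.X)).2
  have hc6 := (hpres L R ρ τ hτL hτR hρ (Q ⊗ Q)).1
  have hc7 := (hpres L R ρ τ hτL hτR hρ (𝟙_ Z)).1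
  have hc8 := (hpres L R ρ τ hτL hτR hρ (𝟙_ Z)).2
  -- basic monoid computation
  have hassocS : (S.X ◁ S.mon.mul) ≫ S.mon.mul = (α_ S.X S.X S.X).inv ≫ (S.mon.mul ▷ S.X) ≫ S.mon.mul := by
    rw [MonObj.mul_assoc]; simp
  -- the T-side identities
  set ψ' : T.X ⊗ (T.X ⊗ B.X) ⟶ T.X ⊗ B.X := (α_ T.X T.X B.X).inv ≫ (T.mon.mul ▷ B.X) with hψ'def
  set ψ : (T.X ⊗ B.X) ⊗ T.X ⟶ T.X ⊗ B.X :=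
    (α_ T.X B.X T.X).hom ≫ (T.X ◁ (β_ B.X T.X).hom) ≫ ψ' with hψdef
  have claim1' : (((T.X ◁ b.hom) ≫ T.mon.mul) ▷ T.X) ≫ T.mon.mul =
      ψ ≫ (T.X ◁ b.hom) ≫ T.mon.mul := by
    rw [hψdef, hψ'def]
    rw [comp_whiskerRight, Category.assoc, MonObj.mul_assoc,
      associator_naturality_middle_assoc, ← MonoidalCategory.whiskerLeft_comp_assoc, hbc]
    simp only [Category.assoc, ← whisker_exchange_assoc, MonObj.mul_assoc]
    simp
  have claim3' : (T.X ◁ ((T.X ◁ b.hom) ≫ T.mon.mul)) ≫ T.mon.mul =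
      ψ' ≫ (T.X ◁ b.hom) ≫ T.mon.mul := by
    rw [hψ'def]
    simp only [Category.assoc, ← whisker_exchange_assoc, MonObj.mul_assoc]
    simp
  -- the S-side identities
  have hwu : (B.X ◁ S.mon.mul) ≫ (b'.hom ▷ S.X) ≫ S.mon.mul
      = (α_ B.X S.X S.X).inv ≫ (((b'.hom ▷ S.X) ≫ S.mon.mul) ▷ S.X) ≫ S.mon.mul := by
    rw [whisker_exchange_assoc, hassocS, associator_inv_naturality_left_assoc]
    simp [comp_whiskerRight]
  have hwu' : (S.X ◁ ((b'.hom ▷ S.X) ≫ S.mon.mul)) ≫ S.mon.mul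
      = (α_ S.X B.X S.X).inv ≫ ((β_ S.X B.X).hom ▷ S.X) ≫
          (((b'.hom ▷ S.X) ≫ S.mon.mul) ▷ S.X) ≫ S.mon.mul := by
    rw [MonoidalCategory.whiskerLeft_comp, Category.assoc, hassocS,
      associator_inv_naturality_middle_assoc, ← comp_whiskerRight_assoc, hb'c]
    simp [comp_whiskerRight]
  -- the structural identities
  have dagger : ((α_ T.X B.X S.X).hom ▷ (T.X ⊗ S.X)) ≫ tensorμ T.X (B.X ⊗ S.X) T.X S.X ≫
        (T.mon.mul ▷ ((B.X ⊗ S.X) ⊗ S.X))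
      = tensorμ (T.X ⊗ B.X) S.X T.X S.X ≫
          (ψ ▷ (S.X ⊗ S.X)) ≫
          (α_ T.X B.X (MonoidalCategoryStruct.tensorObj S.X S.X)).hom ≫
          (T.X ◁ (α_ B.X S.X S.X).inv) := by
    rw [hψdef, hψ'def]
    dsimp only [tensorμ]
    rw [BraidedCategory.braiding_tensor_left_hom]
    monoidal
  have ddagger : ((T.X ⊗ S.X) ◁ (α_ T.X B.X S.X).hom) ≫ tensorμ T.X S.X T.X (B.X ⊗ S.X) ≫
        (T.mon.mul ▷ (S.X ⊗ (B.X ⊗ S.X))) ≫ (T.X ◁ (α_ S.X B.X S.X).inv) ≫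
        (T.X ◁ ((β_ S.X B.X).hom ▷ S.X))
      = tensorμ T.X S.X (T.X ⊗ B.X) S.X ≫
          (ψ' ▷ (S.X ⊗ S.X)) ≫
          (α_ T.X B.X (MonoidalCategoryStruct.tensorObj S.X S.X)).hom ≫
          (T.X ◁ (α_ B.X S.X S.X).inv) := by
    rw [hψ'def]
    dsimp only [tensorμ]
    rw [BraidedCategory.braiding_tensor_right_hom, ← whisker_exchange_assoc, ← whisker_exchange]
    monoidal
  -- the four key claims
  have claim1 : (L ▷ (T.X ⊗ S.X)) ≫ tensorμ T.X S.X T.X S.X ≫ (T.mon.mul ⊗ₘ S.mon.mul)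
      = (tensorμ (T.X ⊗ B.X) S.X T.X S.X ≫
          (ψ ⊗ₘ S.mon.mul)) ≫ L := by
    rw [hLdef]
    have h1 := tensorμ_natural_left ((T.X ◁ b.hom) ≫ T.mon.mul) (𝟙 S.X) T.X S.X
    rw [tensorHom_id, id_whiskerRight] at h1
    rw [reassoc_of% h1, tensorHom_comp_tensorHom, Category.id_comp, claim1']
    conv_rhs => rw [Category.assoc, ← tensorHom_id ((T.X ◁ b.hom) ≫ T.mon.mul) S.X, tensorHom_comp_tensorHom]
    simp
  have claim2 : (R ▷ (T.X ⊗ S.X)) ≫ tensorμ T.X S.X T.X S.X ≫ (T.mon.mul ⊗ₘ S.mon.mul)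
      = (tensorμ (T.X ⊗ B.X) S.X T.X S.X ≫
          (ψ ⊗ₘ S.mon.mul)) ≫ R := by
    rw [hRdef]
    have h2 := tensorμ_natural_left (𝟙 T.X) ((b'.hom ▷ S.X) ≫ S.mon.mul) T.X S.X
    rw [id_tensorHom, id_whiskerRight] at h2
    rw [comp_whiskerRight, Category.assoc, reassoc_of% h2, tensorHom_comp_tensorHom, Category.id_comp]
    rw [tensorHom_def T.mon.mul ((((b'.hom ▷ S.X) ≫ S.mon.mul) ▷ S.X) ≫ S.mon.mul)]
    rw [Category.assoc, tensorHom_def _ S.mon.mul]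
    simp only [Category.assoc]
    rw [associator_naturality_right_assoc, ← MonoidalCategory.whiskerLeft_comp, hwu,
      MonoidalCategory.whiskerLeft_comp]
    rw [reassoc_of% dagger]
    simp only [MonoidalCategory.whiskerLeft_comp, Category.assoc]
  have claim3 : ((T.X ⊗ S.X) ◁ L) ≫ tensorμ T.X S.X T.X S.X ≫ (T.mon.mul ⊗ₘ S.mon.mul)
      = (tensorμ T.X S.X (T.X ⊗ B.X) S.X ≫
          (ψ' ⊗ₘ S.mon.mul)) ≫ L := by
    rw [hLdef]
    have h3 := tensorμ_natural_right T.X S.X ((T.X ◁ b.hom) ≫ T.mon.mul) (𝟙 S.X)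
    rw [tensorHom_id, MonoidalCategory.whiskerLeft_id] at h3
    rw [reassoc_of% h3, tensorHom_comp_tensorHom, Category.id_comp, claim3']
    conv_rhs => rw [Category.assoc, ← tensorHom_id ((T.X ◁ b.hom) ≫ T.mon.mul) S.X, tensorHom_comp_tensorHom]
    simp
  have claim4 : ((T.X ⊗ S.X) ◁ R) ≫ tensorμ T.X S.X T.X S.X ≫ (T.mon.mul ⊗ₘ S.mon.mul)
      = (tensorμ T.X S.X (T.X ⊗ B.X) S.X ≫
          (ψ' ⊗ₘ S.mon.mul)) ≫ R := by
    rw [hRdef]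
    have h4 := tensorμ_natural_right T.X S.X (𝟙 T.X) ((b'.hom ▷ S.X) ≫ S.mon.mul)
    rw [id_tensorHom, MonoidalCategory.whiskerLeft_id] at h4
    rw [MonoidalCategory.whiskerLeft_comp, Category.assoc, reassoc_of% h4,
      tensorHom_comp_tensorHom, Category.id_comp, hwu', MonoidalCategory.tensorHom_def]
    rw [Category.assoc, tensorHom_def _ S.mon.mul]
    simp only [Category.assoc]
    rw [associator_naturality_right_assoc, ← MonoidalCategory.whiskerLeft_comp, hwu,
      MonoidalCategory.whiskerLeft_comp]
    simp only [MonoidalCategory.whiskerLeft_comp, Category.assoc]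
    rw [reassoc_of% ddagger]
  -- descend the multiplication
  have key1 : (L ▷ (T.X ⊗ S.X)) ≫ (tensorμ T.X S.X T.X S.X ≫ (T.mon.mul ⊗ₘ S.mon.mul)) ≫ ρ
      = (R ▷ (T.X ⊗ S.X)) ≫ (tensorμ T.X S.X T.X S.X ≫ (T.mon.mul ⊗ₘ S.mon.mul)) ≫ ρ := by
    rw [← Category.assoc, claim1]
    conv_rhs => rw [← Category.assoc, claim2]
    simp only [Category.assoc]
    rw [hρ.1]
  obtain ⟨m₁, hm₁, -⟩ := hc1.2 ((tensorμ T.X S.X T.X S.X ≫ (T.mon.mul ⊗ₘ S.mon.mul)) ≫ ρ) key1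
  have key2 : (Q ◁ L) ≫ m₁ = (Q ◁ R) ≫ m₁ := by
    apply cancel hc3
    rw [← whisker_exchange_assoc, ← whisker_exchange_assoc, hm₁]
    rw [← Category.assoc, claim3]
    conv_rhs => rw [← Category.assoc, claim4]
    simp only [Category.assoc]
    rw [hρ.1]
  obtain ⟨mulQ, hmulQ, -⟩ := hc2.2 m₁ key2
  have hm₁' : (ρ ▷ (T.X ⊗ S.X)) ≫ m₁ = (T ⊗ S : Mon Z).mon.mul ≫ ρ := hm₁
  -- ρ is multiplicative
  have hhom : (ρ ⊗ₘ ρ) ≫ mulQ = (T ⊗ S : Mon Z).mon.mul ≫ ρ := by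
    rw [MonoidalCategory.tensorHom_def, Category.assoc, hmulQ, hm₁']
  have hhom' : (ρ ▷ (T.X ⊗ S.X)) ≫ (Q ◁ ρ) ≫ mulQ = (T ⊗ S : Mon Z).mon.mul ≫ ρ := by
    rw [← Category.assoc, ← MonoidalCategory.tensorHom_def]; exact hhom
  have hhom2 : (ρ ▷ (T ⊗ S : Mon Z).X) ≫ (Q ◁ ρ) ≫ mulQ = (T ⊗ S : Mon Z).mon.mul ≫ ρ := hhom'
  have hm₁2 : (ρ ▷ (T ⊗ S : Mon Z).X) ≫ m₁ = (T ⊗ S : Mon Z).mon.mul ≫ ρ := hm₁'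
  -- monoid axioms for T ⊗ S, stated over T.X ⊗ S.X
  have hMA : ((T ⊗ S : Mon Z).mon.mul ▷ (T.X ⊗ S.X)) ≫ (T ⊗ S : Mon Z).mon.mul
      = (α_ (T.X ⊗ S.X) (T.X ⊗ S.X) (T.X ⊗ S.X)).hom ≫
        ((T.X ⊗ S.X) ◁ (T ⊗ S : Mon Z).mon.mul) ≫ (T ⊗ S : Mon Z).mon.mul :=
    MonObj.mul_assoc (T ⊗ S : Mon Z).X
  have hOM : ((T ⊗ S : Mon Z).mon.one ▷ (T.X ⊗ S.X)) ≫ (T ⊗ S : Mon Z).mon.mul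
      = (λ_ (T.X ⊗ S.X)).hom := MonObj.one_mul (T ⊗ S : Mon Z).X
  have hMO : ((T.X ⊗ S.X) ◁ (T ⊗ S : Mon Z).mon.one) ≫ (T ⊗ S : Mon Z).mon.mul
      = (ρ_ (T.X ⊗ S.X)).hom := MonObj.mul_one (T ⊗ S : Mon Z).X
  refine ⟨mulQ, (T ⊗ S : Mon Z).mon.one ≫ ρ, ?_, ?_, ?_, hhom, rfl, ?_⟩
  · -- associativity
    apply cancel hc6
    apply cancel hc5
    apply cancel hc4
    have eL : ((ρ ▷ (T.X ⊗ S.X)) ▷ (T.X ⊗ S.X)) ≫ ((Q ◁ ρ) ▷ (T.X ⊗ S.X)) ≫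
        ((Q ⊗ Q) ◁ ρ) ≫ (mulQ ▷ Q) ≫ mulQ
        = ((T ⊗ S : Mon Z).mon.mul ▷ (T.X ⊗ S.X)) ≫ (T ⊗ S : Mon Z).mon.mul ≫ ρ := by
      rw [whisker_exchange_assoc mulQ ρ,
        ← comp_whiskerRight_assoc (Q ◁ ρ) mulQ, hmulQ,
        ← comp_whiskerRight_assoc (ρ ▷ (T.X ⊗ S.X)) m₁, hm₁',
        comp_whiskerRight, Category.assoc, hm₁']
    have eR : ((ρ ▷ (T.X ⊗ S.X)) ▷ (T.X ⊗ S.X)) ≫ ((Q ◁ ρ) ▷ (T.X ⊗ S.X)) ≫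
        ((Q ⊗ Q) ◁ ρ) ≫ (α_ Q Q Q).hom ≫ (Q ◁ mulQ) ≫ mulQ
        = (α_ (T.X ⊗ S.X) (T.X ⊗ S.X) (T.X ⊗ S.X)).hom ≫
          ((T.X ⊗ S.X) ◁ (T ⊗ S : Mon Z).mon.mul) ≫ (T ⊗ S : Mon Z).mon.mul ≫ ρ := by
      rw [associator_naturality_right_assoc, associator_naturality_middle_assoc,
        associator_naturality_left_assoc,
        ← MonoidalCategory.whiskerLeft_comp_assoc, ← MonoidalCategory.whiskerLeft_comp_assoc,
        Category.assoc, hhom', MonoidalCategory.whiskerLeft_comp_assoc,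
        ← whisker_exchange_assoc, hhom2]
    rw [eL, eR, reassoc_of% hMA]
  · -- left unit
    apply cancel hc7
    rw [whisker_exchange_assoc, hmulQ, comp_whiskerRight, Category.assoc, hm₁',
      reassoc_of% hOM, leftUnitor_naturality]
  · -- right unit
    apply cancel hc8
    rw [← whisker_exchange_assoc, MonoidalCategory.whiskerLeft_comp, Category.assoc,
      whisker_exchange_assoc, hmulQ, hm₁2, reassoc_of% hMO, rightUnitor_naturality]
  · -- uniqueness
    intro mul' one' _ _ _ h4' h5'
    refine ⟨?_, h5'.symm⟩
    apply cancel hc2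
    apply cancel hc1
    rw [← Category.assoc, ← Category.assoc, ← MonoidalCategory.tensorHom_def, h4', hhom]
end

section
/- With notation as in the composition of cospans, the composed cospan A → T⊗_B S ← C, with legs α = ρ∘(a⊗ι_S) and γ = ρ∘(ι_T⊗c), is again a cospan between commutative algebras: α and γ are algebra homomorphisms and satisfy the left/right centrality conditions μ∘(id⊗α) = μ∘(α⊗id)∘c and μ∘(γ⊗id) = μ∘(id⊗γ)∘c in T⊗_B S. -/
open CategoryTheory MonoidalCategory

universe v u

section Aux

variable {Z : Type u} [Category.{v} Z]

/-- A coequalizer map is epic. -/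
lemma IsCoeq.cancel {U V Q : Z} {L R : U ⟶ V} {ρ : V ⟶ Q} (h : IsCoeq L R ρ)
    {W : Z} {k k' : Q ⟶ W} (hk : ρ ≫ k = ρ ≫ k') : k = k' := by
  obtain ⟨h1, h2⟩ := h
  obtain ⟨m, hm, hu⟩ := h2 (ρ ≫ k') (by rw [← Category.assoc, h1, Category.assoc])
  exact (hu k hk).trans (hu k' rfl).symm

variable [MonoidalCategory Z] [BraidedCategory Z]

lemma coherE (Tx Sx Ax : Z) :
    ((Tx ⊗ Sx) ◁ (ρ_ Ax).inv) ≫ tensorμ Tx Sx Ax (𝟙_ Z) ≫ ((β_ Tx Ax).hom ⊗ₘ (ρ_ Sx).hom)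
    = (β_ (Tx ⊗ Sx) Ax).hom ≫ ((ρ_ Ax).inv ▷ (Tx ⊗ Sx)) ≫ tensorμ Ax (𝟙_ Z) Tx Sx
        ≫ (𝟙 (Ax ⊗ Tx) ⊗ₘ (λ_ Sx).hom) := by
  simp [tensorμ, BraidedCategory.braiding_tensor_left_hom, MonoidalCategory.tensorHom_def, braiding_tensorUnit_left,
    braiding_tensorUnit_right]
  monoidal

lemma coherE' (Tx Sx Cx : Z) :
    ((λ_ Cx).inv ▷ (Tx ⊗ Sx)) ≫ tensorμ (𝟙_ Z) Cx Tx Sx ≫ ((λ_ Tx).hom ⊗ₘ (β_ Cx Sx).hom)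
    = (β_ Cx (Tx ⊗ Sx)).hom ≫ ((Tx ⊗ Sx) ◁ (λ_ Cx).inv) ≫ tensorμ Tx Sx (𝟙_ Z) Cx
        ≫ ((ρ_ Tx).hom ⊗ₘ 𝟙 (Sx ⊗ Cx)) := by
  simp [tensorμ, BraidedCategory.braiding_tensor_right_hom, MonoidalCategory.tensorHom_def, braiding_tensorUnit_left,
    braiding_tensorUnit_right]
  monoidal

/-- A map landing centrally in `T`, extended by the unit of `S`, lands centrally
in `T ⊗ S`. -/
lemma leftLeg_central (T S : Mon Z) {Ax : Z} (u : Ax ⟶ T.X)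
    (hu : (T.X ◁ u) ≫ T.mon.mul = (β_ T.X Ax).hom ≫ (u ▷ T.X) ≫ T.mon.mul) :
    ((T.X ⊗ S.X) ◁ ((ρ_ Ax).inv ≫ (u ⊗ₘ S.mon.one))) ≫ tensorμ T.X S.X T.X S.X ≫ (T.mon.mul ⊗ₘ S.mon.mul)
    = (β_ (T.X ⊗ S.X) Ax).hom ≫ (((ρ_ Ax).inv ≫ (u ⊗ₘ S.mon.one)) ▷ (T.X ⊗ S.X)) ≫
        tensorμ T.X S.X T.X S.X ≫ (T.mon.mul ⊗ₘ S.mon.mul) := by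
  calc ((T.X ⊗ S.X) ◁ ((ρ_ Ax).inv ≫ (u ⊗ₘ S.mon.one))) ≫ tensorμ T.X S.X T.X S.X ≫ (T.mon.mul ⊗ₘ S.mon.mul)
      = ((T.X ⊗ S.X) ◁ (ρ_ Ax).inv) ≫ tensorμ T.X S.X Ax (𝟙_ Z) ≫
          ((T.X ◁ u ≫ T.mon.mul) ⊗ₘ (S.X ◁ S.mon.one ≫ S.mon.mul)) := by
        rw [MonoidalCategory.whiskerLeft_comp, Category.assoc,
          tensorμ_natural_right_assoc, tensorHom_comp_tensorHom]
    _ = ((T.X ⊗ S.X) ◁ (ρ_ Ax).inv) ≫ tensorμ T.X S.X Ax (𝟙_ Z) ≫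
          ((β_ T.X Ax).hom ⊗ₘ (ρ_ S.X).hom) ≫ ((u ▷ T.X ≫ T.mon.mul) ⊗ₘ 𝟙 S.X) := by
        rw [hu, MonObj.mul_one S.X, tensorHom_comp_tensorHom]
        simp
    _ = (β_ (T.X ⊗ S.X) Ax).hom ≫ ((ρ_ Ax).inv ▷ (T.X ⊗ S.X)) ≫ tensorμ Ax (𝟙_ Z) T.X S.X
          ≫ (𝟙 (Ax ⊗ T.X) ⊗ₘ (λ_ S.X).hom) ≫ ((u ▷ T.X ≫ T.mon.mul) ⊗ₘ 𝟙 S.X) := by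
        rw [← Category.assoc (tensorμ _ _ _ _), ← Category.assoc (((T.X ⊗ S.X) ◁ (ρ_ Ax).inv)),
          coherE]
        simp only [Category.assoc]
    _ = (β_ (T.X ⊗ S.X) Ax).hom ≫ (((ρ_ Ax).inv ≫ (u ⊗ₘ S.mon.one)) ▷ (T.X ⊗ S.X)) ≫
          tensorμ T.X S.X T.X S.X ≫ (T.mon.mul ⊗ₘ S.mon.mul) := by
        rw [comp_whiskerRight, Category.assoc, tensorμ_natural_left_assoc, tensorHom_comp_tensorHom,
          tensorHom_comp_tensorHom]
        simp [MonObj.one_mul S.X]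

/-- A map landing centrally in `S`, extended by the unit of `T`, lands centrally
in `T ⊗ S`. -/
lemma rightLeg_central (T S : Mon Z) {Cx : Z} (v : Cx ⟶ S.X)
    (hv : (v ▷ S.X) ≫ S.mon.mul = (β_ Cx S.X).hom ≫ (S.X ◁ v) ≫ S.mon.mul) :
    (((λ_ Cx).inv ≫ (T.mon.one ⊗ₘ v)) ▷ (T.X ⊗ S.X)) ≫ tensorμ T.X S.X T.X S.X ≫ (T.mon.mul ⊗ₘ S.mon.mul)
    = (β_ Cx (T.X ⊗ S.X)).hom ≫ ((T.X ⊗ S.X) ◁ ((λ_ Cx).inv ≫ (T.mon.one ⊗ₘ v))) ≫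
        tensorμ T.X S.X T.X S.X ≫ (T.mon.mul ⊗ₘ S.mon.mul) := by
  calc (((λ_ Cx).inv ≫ (T.mon.one ⊗ₘ v)) ▷ (T.X ⊗ S.X)) ≫ tensorμ T.X S.X T.X S.X ≫ (T.mon.mul ⊗ₘ S.mon.mul)
      = ((λ_ Cx).inv ▷ (T.X ⊗ S.X)) ≫ tensorμ (𝟙_ Z) Cx T.X S.X ≫
          ((T.mon.one ▷ T.X ≫ T.mon.mul) ⊗ₘ (v ▷ S.X ≫ S.mon.mul)) := by
        rw [comp_whiskerRight, Category.assoc, tensorμ_natural_left_assoc, tensorHom_comp_tensorHom]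
    _ = ((λ_ Cx).inv ▷ (T.X ⊗ S.X)) ≫ tensorμ (𝟙_ Z) Cx T.X S.X ≫
          ((λ_ T.X).hom ⊗ₘ (β_ Cx S.X).hom) ≫ (𝟙 T.X ⊗ₘ (S.X ◁ v ≫ S.mon.mul)) := by
        rw [hv, MonObj.one_mul T.X, tensorHom_comp_tensorHom]
        simp
    _ = (β_ Cx (T.X ⊗ S.X)).hom ≫ ((T.X ⊗ S.X) ◁ (λ_ Cx).inv) ≫ tensorμ T.X S.X (𝟙_ Z) Cx
          ≫ ((ρ_ T.X).hom ⊗ₘ 𝟙 (S.X ⊗ Cx)) ≫ (𝟙 T.X ⊗ₘ (S.X ◁ v ≫ S.mon.mul)) := by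
        rw [← Category.assoc (tensorμ _ _ _ _), ← Category.assoc (((λ_ Cx).inv ▷ (T.X ⊗ S.X))),
          coherE']
        simp only [Category.assoc]
    _ = (β_ Cx (T.X ⊗ S.X)).hom ≫ ((T.X ⊗ S.X) ◁ ((λ_ Cx).inv ≫ (T.mon.one ⊗ₘ v))) ≫
          tensorμ T.X S.X T.X S.X ≫ (T.mon.mul ⊗ₘ S.mon.mul) := by
        rw [MonoidalCategory.whiskerLeft_comp, Category.assoc, tensorμ_natural_right_assoc,
          tensorHom_comp_tensorHom, tensorHom_comp_tensorHom]
        simp [MonObj.mul_one T.X]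

/-- The unit of a monoid object, as a morphism of monoid objects. -/
def unitHom (S : Mon Z) : 𝟙_ (Mon Z) ⟶ S :=
  Mon.Hom.mk' S.mon.one (by simp) (by simp [MonoidalCategory.tensorHom_def, unitors_equal])

/-- The canonical inclusion `T ⟶ T ⊗ S` as a morphism of monoid objects. -/
def iotaT (T S : Mon Z) : T ⟶ T ⊗ S := (ρ_ T).inv ≫ (T ◁ unitHom S)

/-- The canonical inclusion `S ⟶ T ⊗ S` as a morphism of monoid objects. -/
def iotaS (T S : Mon Z) : S ⟶ T ⊗ S := (λ_ S).inv ≫ (unitHom T ▷ S)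

@[simp] lemma iotaT_hom (T S : Mon Z) :
    (iotaT T S).hom = (ρ_ T.X).inv ≫ (T.X ◁ S.mon.one) := by
  simp [iotaT, unitHom]

@[simp] lemma iotaS_hom (T S : Mon Z) :
    (iotaS T S).hom = (λ_ S.X).inv ≫ (T.mon.one ▷ S.X) := by
  simp [iotaS, unitHom]

end Aux

/-- The composite of two cospans of commutative algebras is again a
cospan: the legs `α = ρ ∘ (a ⊗ ι_S)` and `γ = ρ ∘ (ι_T ⊗ c)` into the fibered tensor
product `T ⊗_B S` are algebra homomorphisms satisfying the centrality conditions. -/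
theorem composedCospan_is_cospan
    {Z : Type u} [Category.{v} Z] [MonoidalCategory Z] [BraidedCategory Z]
    (hexist : ∀ {U V : Z} (L R : U ⟶ V) (τ : V ⟶ U),
      τ ≫ L = 𝟙 V → τ ≫ R = 𝟙 V → ∃ (Q : Z) (ρ : V ⟶ Q), IsCoeq L R ρ)
    (hpres : ∀ {U V Q : Z} (L R : U ⟶ V) (ρ : V ⟶ Q) (τ : V ⟶ U),
      τ ≫ L = 𝟙 V → τ ≫ R = 𝟙 V → IsCoeq L R ρ →
      ∀ X : Z, IsCoeq (X ◁ L) (X ◁ R) (X ◁ ρ) ∧ IsCoeq (L ▷ X) (R ▷ X) (ρ ▷ X))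
    (A T B S Cc : Mon Z)
    (hA : (β_ A.X A.X).hom ≫ A.mon.mul = A.mon.mul)      -- A is commutative
    (hB : (β_ B.X B.X).hom ≫ B.mon.mul = B.mon.mul)      -- B is commutative
    (hC : (β_ Cc.X Cc.X).hom ≫ Cc.mon.mul = Cc.mon.mul)  -- C is commutative
    -- the cospan `A → T ← B`
    (a : A ⟶ T) (b : B ⟶ T)
    (hac : (T.X ◁ a.hom) ≫ T.mon.mul = (β_ T.X A.X).hom ≫ (a.hom ▷ T.X) ≫ T.mon.mul)
    (hbc : (b.hom ▷ T.X) ≫ T.mon.mul = (β_ B.X T.X).hom ≫ (T.X ◁ b.hom) ≫ T.mon.mul)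
    -- the cospan `B → S ← C`
    (b' : B ⟶ S) (c : Cc ⟶ S)
    (hb'c : (S.X ◁ b'.hom) ≫ S.mon.mul = (β_ S.X B.X).hom ≫ (b'.hom ▷ S.X) ≫ S.mon.mul)
    (hcc : (c.hom ▷ S.X) ≫ S.mon.mul = (β_ Cc.X S.X).hom ≫ (S.X ◁ c.hom) ≫ S.mon.mul)
    -- the fibered tensor product with its induced algebra structure
    (Q : Z) (ρ : T.X ⊗ S.X ⟶ Q)
    (hρ : IsCoeq
      (((T.X ◁ b.hom) ≫ T.mon.mul) ▷ S.X)
      ((α_ T.X B.X S.X).hom ≫ (T.X ◁ ((b'.hom ▷ S.X) ≫ S.mon.mul)))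
      ρ)
    (mulQ : Q ⊗ Q ⟶ Q) (oneQ : 𝟙_ Z ⟶ Q)
    (hassoc : (mulQ ▷ Q) ≫ mulQ = (α_ Q Q Q).hom ≫ (Q ◁ mulQ) ≫ mulQ)
    (honemul : (oneQ ▷ Q) ≫ mulQ = (λ_ Q).hom)
    (hmulone : (Q ◁ oneQ) ≫ mulQ = (ρ_ Q).hom)
    (hρmul : (ρ ⊗ₘ ρ) ≫ mulQ = (T ⊗ S : Mon Z).mon.mul ≫ ρ)
    (hρone : (T ⊗ S : Mon Z).mon.one ≫ ρ = oneQ) :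
    -- the two legs of the composed cospan
    (((a.hom ≫ (ρ_ T.X).inv ≫ (T.X ◁ S.mon.one) ≫ ρ)
        ⊗ₘ (a.hom ≫ (ρ_ T.X).inv ≫ (T.X ◁ S.mon.one) ≫ ρ)) ≫ mulQ
      = A.mon.mul ≫ (a.hom ≫ (ρ_ T.X).inv ≫ (T.X ◁ S.mon.one) ≫ ρ))
    ∧ (A.mon.one ≫ (a.hom ≫ (ρ_ T.X).inv ≫ (T.X ◁ S.mon.one) ≫ ρ) = oneQ)
    ∧ (((c.hom ≫ (λ_ S.X).inv ≫ (T.mon.one ▷ S.X) ≫ ρ)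
        ⊗ₘ (c.hom ≫ (λ_ S.X).inv ≫ (T.mon.one ▷ S.X) ≫ ρ)) ≫ mulQ
      = Cc.mon.mul ≫ (c.hom ≫ (λ_ S.X).inv ≫ (T.mon.one ▷ S.X) ≫ ρ))
    ∧ (Cc.mon.one ≫ (c.hom ≫ (λ_ S.X).inv ≫ (T.mon.one ▷ S.X) ≫ ρ) = oneQ)
    -- the centrality conditions for the legs
    ∧ ((Q ◁ (a.hom ≫ (ρ_ T.X).inv ≫ (T.X ◁ S.mon.one) ≫ ρ)) ≫ mulQ
      = (β_ Q A.X).hom ≫ ((a.hom ≫ (ρ_ T.X).inv ≫ (T.X ◁ S.mon.one) ≫ ρ) ▷ Q) ≫ mulQ)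
    ∧ (((c.hom ≫ (λ_ S.X).inv ≫ (T.mon.one ▷ S.X) ≫ ρ) ▷ Q) ≫ mulQ
      = (β_ Cc.X Q).hom ≫ (Q ◁ (c.hom ≫ (λ_ S.X).inv ≫ (T.mon.one ▷ S.X) ≫ ρ)) ≫ mulQ) := by
  -- the two legs, before passing to the quotient, as morphisms of monoid objects
  set G : A ⟶ (T ⊗ S : Mon Z) := a ≫ iotaT T S with hG
  set H : Cc ⟶ (T ⊗ S : Mon Z) := c ≫ iotaS T S with hH
  have hGhom : G.hom = a.hom ≫ (ρ_ T.X).inv ≫ (T.X ◁ S.mon.one) := by simp [hG]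
  have hHhom : H.hom = c.hom ≫ (λ_ S.X).inv ≫ (T.mon.one ▷ S.X) := by simp [hH]
  have hleg : a.hom ≫ (ρ_ T.X).inv ≫ (T.X ◁ S.mon.one) ≫ ρ = G.hom ≫ ρ := by
    rw [hGhom]; simp only [Category.assoc]
  have hleg' : c.hom ≫ (λ_ S.X).inv ≫ (T.mon.one ▷ S.X) ≫ ρ = H.hom ≫ ρ := by
    rw [hHhom]; simp only [Category.assoc]
  -- alternative forms of the legs
  have hG2 : G.hom = (ρ_ A.X).inv ≫ (a.hom ⊗ₘ S.mon.one) := by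
    rw [hGhom, MonoidalCategory.tensorHom_def, ← rightUnitor_inv_naturality_assoc]
  have hH2 : H.hom = (λ_ Cc.X).inv ≫ (T.mon.one ⊗ₘ c.hom) := by
    rw [hHhom, tensorHom_def', ← leftUnitor_inv_naturality_assoc]
  -- the common section of the coequalized pair
  set τ : T.X ⊗ S.X ⟶ (T.X ⊗ B.X) ⊗ S.X := ((ρ_ T.X).inv ≫ (T.X ◁ B.mon.one)) ▷ S.X with hτ
  have hτL : τ ≫ ((T.X ◁ b.hom) ≫ T.mon.mul) ▷ S.X = 𝟙 (T.X ⊗ S.X) := by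
    rw [hτ, ← comp_whiskerRight]
    have : ((ρ_ T.X).inv ≫ T.X ◁ B.mon.one) ≫ T.X ◁ b.hom ≫ T.mon.mul = 𝟙 T.X := by
      rw [Category.assoc, ← MonoidalCategory.whiskerLeft_comp_assoc, IsMonHom.one_hom b.hom, MonObj.mul_one T.X,
        Iso.inv_hom_id]
    rw [this, id_whiskerRight]
  have hτR : τ ≫ ((α_ T.X B.X S.X).hom ≫ (T.X ◁ ((b'.hom ▷ S.X) ≫ S.mon.mul)))
      = 𝟙 (T.X ⊗ S.X) := by
    rw [hτ, comp_whiskerRight, Category.assoc, associator_naturality_middle_assoc,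
      ← MonoidalCategory.whiskerLeft_comp, ← comp_whiskerRight_assoc, IsMonHom.one_hom b'.hom, MonObj.one_mul S.X]
    monoidal
  -- whiskered coequalizers
  obtain ⟨hcoeqL, hcoeqR⟩ := hpres _ _ ρ τ hτL hτR hρ A.X
  obtain ⟨hcoeqL', hcoeqR'⟩ := hpres _ _ ρ τ hτL hτR hρ Cc.X
  refine ⟨?_, ?_, ?_, ?_, ?_, ?_⟩
  · -- α is multiplicative
    rw [hleg, ← tensorHom_comp_tensorHom, Category.assoc, hρmul, ← Category.assoc, ← IsMonHom.mul_hom]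
    simp only [Category.assoc]
  · -- α is unital
    rw [hleg, ← Category.assoc, IsMonHom.one_hom G.hom, hρone]
  · -- γ is multiplicative
    rw [hleg', ← tensorHom_comp_tensorHom, Category.assoc, hρmul, ← Category.assoc, ← IsMonHom.mul_hom]
    simp only [Category.assoc]
  · -- γ is unital
    rw [hleg', ← Category.assoc, IsMonHom.one_hom H.hom, hρone]
  · -- centrality of α
    rw [hleg]
    apply hcoeqR.cancel
    calc (ρ ▷ A.X) ≫ (Q ◁ (G.hom ≫ ρ)) ≫ mulQ
        = ((T.X ⊗ S.X) ◁ G.hom) ≫ (ρ ⊗ₘ ρ) ≫ mulQ := by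
          simp only [MonoidalCategory.whiskerLeft_comp, Category.assoc]
          rw [← whisker_exchange_assoc, ← tensorHom_def_assoc]
      _ = ((T.X ⊗ S.X) ◁ G.hom) ≫ (T ⊗ S : Mon Z).mon.mul ≫ ρ := by rw [hρmul]
      _ = ((β_ (T.X ⊗ S.X) A.X).hom ≫ (G.hom ▷ (T.X ⊗ S.X)) ≫ (T ⊗ S : Mon Z).mon.mul) ≫ ρ := by
          have key : ((T.X ⊗ S.X) ◁ G.hom) ≫ (T ⊗ S : Mon Z).mon.mul
              = (β_ (T.X ⊗ S.X) A.X).hom ≫ (G.hom ▷ (T.X ⊗ S.X)) ≫ (T ⊗ S : Mon Z).mon.mul := by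
            rw [hG2]
            simpa [Mon.tensorObj_mul, Category.assoc] using leftLeg_central T S a.hom hac
          rw [← Category.assoc, key]
      _ = (ρ ▷ A.X) ≫ ((β_ Q A.X).hom ≫ ((G.hom ≫ ρ) ▷ Q) ≫ mulQ) := by
          rw [comp_whiskerRight, BraidedCategory.braiding_naturality_left_assoc]
          simp only [Category.assoc]
          rw [whisker_exchange_assoc, ← tensorHom_def'_assoc, hρmul]
  · -- centrality of γ
    rw [hleg']
    apply hcoeqL'.cancel
    calc (Cc.X ◁ ρ) ≫ ((H.hom ≫ ρ) ▷ Q) ≫ mulQ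
        = (H.hom ▷ (T.X ⊗ S.X)) ≫ (ρ ⊗ₘ ρ) ≫ mulQ := by
          simp only [comp_whiskerRight, Category.assoc]
          rw [whisker_exchange_assoc, ← tensorHom_def'_assoc]
      _ = (H.hom ▷ (T.X ⊗ S.X)) ≫ (T ⊗ S : Mon Z).mon.mul ≫ ρ := by rw [hρmul]
      _ = ((β_ Cc.X (T.X ⊗ S.X)).hom ≫ ((T.X ⊗ S.X) ◁ H.hom) ≫ (T ⊗ S : Mon Z).mon.mul) ≫ ρ := by
          have key : (H.hom ▷ (T.X ⊗ S.X)) ≫ (T ⊗ S : Mon Z).mon.mul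
              = (β_ Cc.X (T.X ⊗ S.X)).hom ≫ ((T.X ⊗ S.X) ◁ H.hom) ≫ (T ⊗ S : Mon Z).mon.mul := by
            rw [hH2]
            simpa [Mon.tensorObj_mul, Category.assoc] using rightLeg_central T S c.hom hcc
          rw [← Category.assoc, key]
      _ = (Cc.X ◁ ρ) ≫ ((β_ Cc.X Q).hom ≫ (Q ◁ (H.hom ≫ ρ)) ≫ mulQ) := by
          rw [MonoidalCategory.whiskerLeft_comp, BraidedCategory.braiding_naturality_right_assoc]
          simp only [Category.assoc]
          rw [← whisker_exchange_assoc, ← tensorHom_def_assoc, hρmul]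
end
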